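/- Let p be a prime and let M be the localization of the polynomial ring 𝔽_p[t] at the multiplicative submonoid generated by t and t−1 (so M = 𝔽_p[t^{±1}, (t−1)^{±1}]). For every j ≥ 1, the quotient module M/(tʲ−1)M is finite with cardinality p^{j − p^{v_p(j)}}, where v_p(j) is the p-adic valuation of j (so p^{v_p(j)} is the largest power of p dividing j). -/

import Mathlib

open Polynomial

private lemma aux_loc {R : Type} [CommRing R] [IsDomain R] (M : Submonoid R)
    (hM : M ≤ nonZeroDivisors R) (h : R) (hcop : ∀ s ∈ M, IsCoprime s h) :
    Nonempty ((R ⧸ Ideal.span {h}) ≃+*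
      (Localization M ⧸ Ideal.span {algebraMap R (Localization M) h})) := by
  set L := Localization M with hL
  set φ : R →+* L := algebraMap R L with hφ
  set J : Ideal L := Ideal.span {φ h} with hJ
  set ψ : R →+* L ⧸ J := (Ideal.Quotient.mk J).comp φ with hψ
  have hψh : ψ h = 0 := by
    rw [hψ, RingHom.comp_apply, Ideal.Quotient.eq_zero_iff_mem]
    exact Ideal.subset_span rfl
  have hφinj : Function.Injective φ := IsLocalization.injective L hM
  have hsurj : Function.Surjective ψ := by
    intro z
    obtain ⟨z', rfl⟩ := Ideal.Quotient.mk_surjective z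
    obtain ⟨⟨r, s⟩, rfl⟩ := IsLocalization.mk'_surjective M z'
    obtain ⟨a, b, hab⟩ := hcop s s.2
    refine ⟨r * a, ?_⟩
    have h1 : (Ideal.Quotient.mk J) (IsLocalization.mk' L r s) * ψ s = ψ r := by
      rw [hψ, RingHom.comp_apply, RingHom.comp_apply, ← map_mul,
        IsLocalization.mk'_spec]
    have h2 : ψ a * ψ s = 1 := by
      have h3 : ψ (a * s) + ψ (b * h) = ψ 1 := by rw [← map_add, hab]
      rw [map_mul, map_mul, hψh, mul_zero, add_zero, map_one] at h3
      exact h3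
    calc ψ (r * a) = ψ r * ψ a := by rw [map_mul]
      _ = ((Ideal.Quotient.mk J) (IsLocalization.mk' L r s) * ψ s) * ψ a := by rw [h1]
      _ = (Ideal.Quotient.mk J) (IsLocalization.mk' L r s) * (ψ a * ψ s) := by ring
      _ = (Ideal.Quotient.mk J) (IsLocalization.mk' L r s) := by rw [h2, mul_one]
  have hker : RingHom.ker ψ = Ideal.span {h} := by
    ext r
    simp only [RingHom.mem_ker, hψ, RingHom.comp_apply, Ideal.Quotient.eq_zero_iff_mem]
    constructor
    · intro hr
      have hr' : φ r ∈ Ideal.map φ (Ideal.span {h}) := by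
        rwa [Ideal.map_span, Set.image_singleton]
      rw [IsLocalization.mem_map_algebraMap_iff M L] at hr'
      obtain ⟨⟨⟨a, ha⟩, s⟩, heq⟩ := hr'
      simp only at heq
      rw [← map_mul] at heq
      have heq' : r * (s : R) = a := hφinj heq
      rw [Ideal.mem_span_singleton] at ha ⊢
      have hdvd : h ∣ r * (s : R) := heq' ▸ ha
      exact ((hcop s s.2).symm).dvd_of_dvd_mul_right hdvd
    · intro hr
      rw [Ideal.mem_span_singleton] at hr
      obtain ⟨c, rfl⟩ := hr
      rw [map_mul]
      exact Ideal.mul_mem_right _ _ (Ideal.subset_span rfl)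
  exact ⟨(Ideal.quotEquivOfEq hker.symm).trans (RingHom.quotientKerEquivOfSurjective hsurj)⟩

private lemma aux_card (p : ℕ) [Fact p.Prime] (h : Polynomial (ZMod p)) (hm : h.Monic) :
    Finite (Polynomial (ZMod p) ⧸ Ideal.span {h}) ∧
    Nat.card (Polynomial (ZMod p) ⧸ Ideal.span {h}) = p ^ h.natDegree := by
  have hh0 : h ≠ 0 := hm.ne_zero
  let pb : PowerBasis (ZMod p) (AdjoinRoot h) := AdjoinRoot.powerBasis hh0
  have hdim : pb.dim = h.natDegree := AdjoinRoot.powerBasis_dim hh0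
  have eadj : (Polynomial (ZMod p) ⧸ Ideal.span {h}) ≃+* AdjoinRoot h := RingEquiv.refl _
  have efun : AdjoinRoot h ≃ (Fin pb.dim → ZMod p) := pb.basis.equivFun.toEquiv
  have hfin : Finite (AdjoinRoot h) := Finite.of_equiv _ efun.symm
  refine ⟨Finite.of_equiv _ eadj.symm.toEquiv, ?_⟩
  rw [Nat.card_congr eadj.toEquiv, Nat.card_congr efun, Nat.card_fun,
    Nat.card_eq_fintype_card (α := Fin pb.dim), Fintype.card_fin, Nat.card_zmod, hdim]

/-- For `M = 𝔽_p[t^{±1}, (t-1)^{±1}]`, i.e. the localization of `𝔽_p[t]` at the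
multiplicative submonoid generated by `t` and `t - 1`, the quotient
`M/(tʲ-1)M` is finite of cardinality `p^(j - p^(v_p(j)))` for every `j ≥ 1`. -/
theorem card_quotient_localization_pow_sub_one (p : ℕ) (hp : p.Prime) (j : ℕ) (hj : 1 ≤ j) :
    Finite
      (Localization (Submonoid.closure {(X : Polynomial (ZMod p)), X - 1}) ⧸
        Ideal.span {algebraMap (Polynomial (ZMod p))
          (Localization (Submonoid.closure {(X : Polynomial (ZMod p)), X - 1}))
          (X ^ j - 1)}) ∧
    Nat.card
      (Localization (Submonoid.closure {(X : Polynomial (ZMod p)), X - 1}) ⧸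
        Ideal.span {algebraMap (Polynomial (ZMod p))
          (Localization (Submonoid.closure {(X : Polynomial (ZMod p)), X - 1}))
          (X ^ j - 1)}) =
      p ^ (j - p ^ padicValNat p j) := by
  haveI := Fact.mk hp
  classical
  obtain ⟨m, hjm⟩ : p ^ padicValNat p j ∣ j := pow_padicValNat_dvd
  have hj0 : j ≠ 0 := by omega
  have hm0 : m ≠ 0 := by rintro rfl; rw [mul_zero] at hjm; omega
  have hpm : ¬ p ∣ m := by
    intro hd
    refine pow_succ_padicValNat_not_dvd (p := p) hj0
      (Dvd.dvd.trans ?_ (dvd_of_eq hjm.symm))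
    rw [pow_succ]
    exact mul_dvd_mul_left _ hd
  set k := padicValNat p j with hk
  set g : Polynomial (ZMod p) := ∑ i ∈ Finset.range m, X ^ i with hg
  set h : Polynomial (ZMod p) := g ^ p ^ k with hh
  have hgmul : g * (X - 1) = X ^ m - 1 := geom_sum_mul X m
  have hXm : (X ^ m - 1 : Polynomial (ZMod p)).Monic := by
    have := monic_X_pow_sub_C (1 : ZMod p) hm0
    simpa using this
  have hX1 : (X - 1 : Polynomial (ZMod p)).Monic := by
    have := monic_X_sub_C (1 : ZMod p)
    simpa using this
  have hgm : g.Monic := hX1.of_mul_monic_left (by rw [mul_comm, hgmul]; exact hXm)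
  have hhm : h.Monic := hgm.pow _
  have hdegg : g.natDegree = m - 1 := by
    have h1 : ((X - 1) * g).natDegree = (X - 1 : Polynomial (ZMod p)).natDegree + g.natDegree :=
      hX1.natDegree_mul hgm
    rw [mul_comm, hgmul] at h1
    have h2 : (X ^ m - 1 : Polynomial (ZMod p)).natDegree = m := by
      have := natDegree_X_pow_sub_C (n := m) (r := (1 : ZMod p))
      simpa using this
    have h3 : (X - 1 : Polynomial (ZMod p)).natDegree = 1 := by
      have := natDegree_X_sub_C (1 : ZMod p)
      simpa using this
    omega
  have hdegh : h.natDegree = j - p ^ k := by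
    obtain ⟨m', rfl⟩ := Nat.exists_eq_succ_of_ne_zero hm0
    rw [hh, natDegree_pow, hdegg, hjm, Nat.succ_sub_one, Nat.mul_succ, Nat.add_sub_cancel]
  have hgcoeff : g.coeff 0 = 1 := by
    rw [hg, finset_sum_coeff]
    simp [coeff_X_pow, Finset.mem_range, Nat.pos_of_ne_zero hm0]
  have hcopX : IsCoprime (X : Polynomial (ZMod p)) g := by
    have hirr : Irreducible (X : Polynomial (ZMod p)) := irreducible_X
    rw [hirr.coprime_iff_not_dvd, X_dvd_iff, hgcoeff]
    exact one_ne_zero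
  have hcopX1 : IsCoprime (X - 1 : Polynomial (ZMod p)) g := by
    have hirr : Irreducible (X - C 1 : Polynomial (ZMod p)) := irreducible_X_sub_C 1
    have h4 : IsCoprime (X - C 1 : Polynomial (ZMod p)) g := by
      rw [hirr.coprime_iff_not_dvd, dvd_iff_isRoot]
      intro hroot
      have h5 : g.eval 1 = 0 := hroot
      rw [hg] at h5
      simp only [eval_finset_sum, eval_pow, eval_X, one_pow, Finset.sum_const,
        Finset.card_range, nsmul_eq_mul, mul_one] at h5
      exact hpm ((ZMod.natCast_eq_zero_iff m p).mp h5)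
    simpa using h4
  have hcop : ∀ s ∈ Submonoid.closure {(X : Polynomial (ZMod p)), X - 1}, IsCoprime s h := by
    intro s hs
    refine Submonoid.closure_induction ?_ ?_ ?_ hs
    · rintro x hx
      rcases hx with rfl | hx
      · exact hcopX.pow_right
      · rw [Set.mem_singleton_iff] at hx; subst hx; exact hcopX1.pow_right
    · exact isCoprime_one_left
    · intro x y _ _ hx hy
      exact hx.mul_left hy
  have hSle : Submonoid.closure {(X : Polynomial (ZMod p)), X - 1} ≤
      nonZeroDivisors (Polynomial (ZMod p)) := by
    rw [Submonoid.closure_le]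
    rintro x (rfl | hx)
    · exact mem_nonZeroDivisors_of_ne_zero X_ne_zero
    · rw [Set.mem_singleton_iff] at hx; subst hx
      refine mem_nonZeroDivisors_of_ne_zero ?_
      have := X_sub_C_ne_zero (1 : ZMod p)
      simpa using this
  haveI : ExpChar (Polynomial (ZMod p)) p := ExpChar.prime hp
  haveI : IsDomain (Localization (Submonoid.closure {(X : Polynomial (ZMod p)), X - 1})) :=
    IsLocalization.isDomain_localization hSle
  have hfactor : (X ^ j - 1 : Polynomial (ZMod p)) = (X - 1) ^ p ^ k * h := by
    rw [hh, ← mul_pow, mul_comm (X - 1 : Polynomial (ZMod p)) g, hgmul,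
      sub_pow_expChar_pow, one_pow, ← pow_mul, hjm, mul_comm]
  have hunit : IsUnit (algebraMap (Polynomial (ZMod p))
      (Localization (Submonoid.closure {(X : Polynomial (ZMod p)), X - 1}))
      ((X - 1 : Polynomial (ZMod p)) ^ p ^ k)) := by
    rw [map_pow]
    exact (IsLocalization.map_units
      (Localization (Submonoid.closure {(X : Polynomial (ZMod p)), X - 1}))
      (⟨X - 1, Submonoid.subset_closure (by simp)⟩ :
        Submonoid.closure {(X : Polynomial (ZMod p)), X - 1})).pow _
  have hspan : Ideal.span {algebraMap (Polynomial (ZMod p))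
        (Localization (Submonoid.closure {(X : Polynomial (ZMod p)), X - 1}))
        (X ^ j - 1)} =
      Ideal.span {algebraMap (Polynomial (ZMod p))
        (Localization (Submonoid.closure {(X : Polynomial (ZMod p)), X - 1})) h} := by
    rw [hfactor, map_mul]
    exact Ideal.span_singleton_eq_span_singleton.mpr
      (Associated.symm ⟨hunit.unit, by rw [mul_comm]; rfl⟩)
  rw [hspan]
  obtain ⟨e⟩ := aux_loc (Submonoid.closure {(X : Polynomial (ZMod p)), X - 1}) hSle h hcop
  obtain ⟨hfin, hcard⟩ := aux_card p h hhm
  refine ⟨Finite.of_equiv _ e.toEquiv, ?_⟩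
  rw [← Nat.card_congr e.toEquiv, hcard, hdegh]
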